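/- arXiv:1502.05445 — 2 statements merged into one kernel-verified Lean document; each statement's English description precedes it below -/
import Mathlib

section
/- Let Γ be a finitely generated torsion-free nilpotent group with nontrivial center and let γ be a nontrivial element of the center of Γ. Then there exists a normal subgroup Λ of Γ such that the quotient Γ/Λ is a torsion-free nilpotent group whose center is infinite cyclic, and the image of γ in Γ/Λ is nontrivial. -/
/-!
Call a subgroup isolated if `x ^ n ∈ Λ` with `n ≠ 0` forces `x ∈ Λ`. By Zorn's lemma there is a
maximal isolated normal subgroup `Λ` not containing `γ`; isolation makes `Γ ⧸ Λ` torsion-free.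
In a torsion-free nilpotent group every term of the upper central series, in particular the
centre, is isolated (climb the series using `⁅a ^ n, b⁆ = ⁅a, b⁆ ^ n` when `⁅a, b⁆` is central).
Hence the preimage of an isolated subgroup of `Z(Γ ⧸ Λ)` is an isolated normal subgroup above `Λ`,
and by maximality it contains `γ` unless it is `Λ` itself.

Finitely generated nilpotent groups are Noetherian, since their lower central factors are
finitely generated abelian groups, so `Z(Γ ⧸ Λ)` is free abelian of finite rank. If the rank were
at least two, the kernel of a suitable coordinate would be a nontrivial isolated subgroup
avoiding the image of `γ`; so the centre is infinite cyclic.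
-/

open scoped commutatorElement IsMulCommutative

namespace Subgroup

variable {G Q : Type*} [Group G] [Group Q]

def IsIsolated (K : Subgroup G) : Prop :=
  ∀ ⦃x : G⦄ ⦃n : ℕ⦄, n ≠ 0 → x ^ n ∈ K → x ∈ K

theorem isIsolated_bot_iff :
    (⊥ : Subgroup G).IsIsolated ↔ ∀ g : G, g ≠ 1 → ¬IsOfFinOrder g := by
  simp only [IsIsolated, mem_bot, isOfFinOrder_iff_pow_eq_one]
  constructor
  · rintro h g hg ⟨n, hn, hgn⟩
    exact hg (h hn.ne' hgn)
  · intro h x n hn hxn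
    by_contra hx
    exact h x hx ⟨n, Nat.pos_of_ne_zero hn, hxn⟩

theorem isIsolated_bot [IsMulTorsionFree G] : (⊥ : Subgroup G).IsIsolated :=
  fun _ _ hn hxn => pow_left_injective hn (hxn.trans (one_pow _).symm)

theorem _root_.isMulTorsionFree_of_isIsolated_bot {A : Type*} [CommGroup A]
    (h : (⊥ : Subgroup A).IsIsolated) : IsMulTorsionFree A :=
  isMulTorsionFree_iff_not_isOfFinOrder.2 fun a ha => isIsolated_bot_iff.1 h a ha

theorem IsIsolated.comap {K : Subgroup Q} (hK : K.IsIsolated) (f : G →* Q) :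
    (K.comap f).IsIsolated :=
  fun x n hn hxn => hK hn (by simpa using hxn)

theorem isIsolated_comap_iff {K : Subgroup Q} {f : G →* Q} (hf : Function.Surjective f) :
    (K.comap f).IsIsolated ↔ K.IsIsolated := by
  refine ⟨fun h y n hn hyn => ?_, fun h => h.comap f⟩
  obtain ⟨x, rfl⟩ := hf y
  exact h hn (by simpa using hyn)

theorem IsIsolated.map_subtype {K : Subgroup G} (hK : K.IsIsolated) {M : Subgroup K}
    (hM : M.IsIsolated) : (M.map K.subtype).IsIsolated := by
  rintro x n hn ⟨y, hy, hyx⟩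
  have hx : x ∈ K := hK hn (hyx ▸ y.2)
  have : y = ⟨x, hx⟩ ^ n := Subtype.ext hyx
  exact ⟨⟨x, hx⟩, hM hn (this ▸ hy), rfl⟩

theorem commutatorElement_pow_left_of_mem_center {a b : G} (h : ⁅a, b⁆ ∈ center G) (n : ℕ) :
    ⁅a ^ n, b⁆ = ⁅a, b⁆ ^ n := by
  induction n with
  | zero => simp
  | succ n ih =>
    rw [pow_succ, commutatorElement_mul_left_eq_conj_mul, ih, mem_center_iff.1 h (a ^ n),
      mul_inv_cancel_right, pow_succ']

theorem commutatorElement_pow_left_mem_upperCentralSeries {a b : G} {i : ℕ}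
    (h : ⁅a, b⁆ ∈ upperCentralSeries G (i + 1)) (n : ℕ) :
    ⁅a ^ n, b⁆ * (⁅a, b⁆ ^ n)⁻¹ ∈ upperCentralSeries G i := by
  set N := upperCentralSeries G i
  have hc : ⁅QuotientGroup.mk' N a, QuotientGroup.mk' N b⁆ ∈ center (G ⧸ N) := by
    rw [← map_commutatorElement, ← mem_comap, ← upperCentralSeriesStep_eq_comap_center]
    exact h
  rw [← QuotientGroup.ker_mk' N, MonoidHom.mem_ker, map_mul, map_inv, map_pow,
    map_commutatorElement, map_commutatorElement, map_pow,
    commutatorElement_pow_left_of_mem_center hc, mul_inv_cancel]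

theorem mem_upperCentralSeries_of_pow_mem (hG : (⊥ : Subgroup G).IsIsolated) (i : ℕ) {z : G}
    {n : ℕ} (hn : n ≠ 0) (hz : z ∈ upperCentralSeries G (i + 1))
    (hzn : z ^ n ∈ upperCentralSeries G i) : z ∈ upperCentralSeries G i := by
  induction i generalizing z with
  | zero => exact hG hn hzn
  | succ i ih =>
    refine mem_upperCentralSeries_succ_iff.2 fun g => ih ?_ ?_
    · exact mem_upperCentralSeries_succ_iff.1 hz g
    · have hpow := commutatorElement_pow_left_mem_upperCentralSeries
        (mem_upperCentralSeries_succ_iff.1 hz g) n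
      have hzg : ⁅z ^ n, g⁆ ∈ upperCentralSeries G i := mem_upperCentralSeries_succ_iff.1 hzn g
      have := mul_mem (inv_mem hpow) hzg
      rwa [mul_inv_rev, inv_inv, inv_mul_cancel_right] at this

theorem isIsolated_upperCentralSeries [Group.IsNilpotent G] (hG : (⊥ : Subgroup G).IsIsolated)
    (i : ℕ) : (upperCentralSeries G i).IsIsolated := by
  intro x n hn hxn
  suffices ∀ d, x ∈ upperCentralSeries G (i + d) → x ∈ upperCentralSeries G i from
    this (Group.nilpotencyClass G) (upperCentralSeries_mono G (Nat.le_add_left _ _)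
      (by rw [upperCentralSeries_nilpotencyClass]; exact mem_top x))
  intro d
  induction d with
  | zero => exact id
  | succ d ih => exact fun hx => ih (mem_upperCentralSeries_of_pow_mem hG _ hn hx
      (upperCentralSeries_mono G (Nat.le_add_right i d) hxn))

theorem isIsolated_center [Group.IsNilpotent G] (hG : (⊥ : Subgroup G).IsIsolated) :
    (center G).IsIsolated :=
  upperCentralSeries_one G ▸ isIsolated_upperCentralSeries hG 1

theorem commutator_closure_le {K : Subgroup G} [K.Normal] {T S : Set G}
    (h : ∀ t ∈ T, ∀ s ∈ S, ⁅t, s⁆ ∈ K) : ⁅closure T, closure S⁆ ≤ K := by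
  rw [← QuotientGroup.ker_mk' K, ← map_eq_bot_iff, map_commutator, MonoidHom.map_closure,
    MonoidHom.map_closure, commutator_eq_bot_iff_le_centralizer, centralizer_closure, closure_le]
  rintro _ ⟨t, ht, rfl⟩ _ ⟨s, hs, rfl⟩
  rw [← commutatorElement_eq_one_iff_mul_comm, ← map_commutatorElement, QuotientGroup.mk'_apply,
    QuotientGroup.eq_one_iff, ← commutatorElement_inv]
  exact inv_mem (h t ht s hs)

theorem normal_of_commutator_le {H K : Subgroup G} (hKH : K ≤ H) (hHK : ⁅H, ⊤⁆ ≤ K) :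
    K.Normal where
  conj_mem k hk g := by
    have hkg : ⁅k, g⁆ ∈ K := hHK (commutator_mem_commutator (hKH hk) (mem_top g))
    convert mul_mem (inv_mem hkg) hk using 1
    group

theorem lowerCentralSeries_succ_eq_closure_sup {S T : Set G} (hS : closure S = ⊤) {i : ℕ}
    (hT : lowerCentralSeries ⊤ i = closure T ⊔ lowerCentralSeries ⊤ (i + 1)) :
    lowerCentralSeries ⊤ (i + 1) =
      closure (Set.image2 (⁅·, ·⁆) T S) ⊔ lowerCentralSeries ⊤ (i + 2) := by
  have hTi : closure T ≤ lowerCentralSeries ⊤ i := hT ▸ le_sup_left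
  have hle : closure (Set.image2 (⁅·, ·⁆) T S) ⊔ lowerCentralSeries ⊤ (i + 2) ≤
      lowerCentralSeries ⊤ (i + 1) := by
    refine sup_le ?_ (lowerCentralSeries_antitone ⊤ (Nat.le_succ _))
    rw [closure_le]
    rintro _ ⟨t, ht, s, -, rfl⟩
    exact commutator_mem_commutator (hTi (subset_closure ht)) (mem_top s)
  have := normal_of_commutator_le hle le_sup_right
  refine le_antisymm ?_ hle
  calc lowerCentralSeries ⊤ (i + 1)
      = ⁅closure (T ∪ (lowerCentralSeries (⊤ : Subgroup G) (i + 1) : Set G)), closure S⁆ := by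
        rw [closure_union, closure_eq, ← hT, hS, lowerCentralSeries_succ]
    _ ≤ _ := by
        refine commutator_closure_le fun t ht s hs => ?_
        rcases ht with ht | ht
        · exact mem_sup_left (subset_closure (Set.mem_image2_of_mem ht hs))
        · exact mem_sup_right (commutator_mem_commutator ht (mem_top s))

theorem exists_finite_lowerCentralSeries_eq_closure_sup [Group.FG G] (i : ℕ) :
    ∃ T : Set G, T.Finite ∧ lowerCentralSeries ⊤ i = closure T ⊔ lowerCentralSeries ⊤ (i + 1) := by
  obtain ⟨S, hS, hSfin⟩ := Group.fg_iff.1 ‹_›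
  induction i with
  | zero => exact ⟨S, hSfin, by rw [hS, top_sup_eq, lowerCentralSeries_zero]⟩
  | succ i ih =>
    obtain ⟨T, hTfin, hT⟩ := ih
    exact ⟨_, hTfin.image2 _ hSfin, lowerCentralSeries_succ_eq_closure_sup hS hT⟩

theorem lowerCentralSeries_fg [Group.FG G] [Group.IsNilpotent G] (i : ℕ) :
    (lowerCentralSeries (⊤ : Subgroup G) i).FG := by
  suffices ∀ d i, Group.nilpotencyClass G ≤ i + d → (lowerCentralSeries (⊤ : Subgroup G) i).FG from
    this _ i (Nat.le_add_left _ _)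
  intro d
  induction d with
  | zero =>
    intro i hi
    rw [lowerCentralSeries_eq_bot_iff_nilpotencyClass_le.2 (by simpa using hi)]
    exact FG.bot
  | succ d ih =>
    intro i hi
    obtain ⟨T, hTfin, hT⟩ := exists_finite_lowerCentralSeries_eq_closure_sup (G := G) i
    rw [hT]
    exact ((fg_iff _).2 ⟨T, rfl, hTfin⟩).sup (ih (i + 1) (by omega))

theorem FG.of_inf_ker_of_map {f : G →* Q} {K : Subgroup G} (hker : (K ⊓ f.ker).FG)
    (hmap : (K.map f).FG) : K.FG := by
  obtain ⟨S, hSK, hSfin, hS⟩ : ∃ S ⊆ (K : Set G), S.Finite ∧ closure (f '' S) = K.map f := by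
    obtain ⟨T, hT, hTfin⟩ := (fg_iff _).1 hmap
    have hTK : T ⊆ f '' K := by rw [← coe_map, ← hT]; exact subset_closure
    exact Set.exists_subset_image_finite_and (p := fun T => closure T = K.map f) |>.1
      ⟨T, hTK, hTfin, hT⟩
  suffices K = closure S ⊔ (K ⊓ f.ker) from this ▸ ((fg_iff _).2 ⟨S, rfl, hSfin⟩).sup hker
  refine le_antisymm (fun x hx => ?_) (sup_le ((closure_le _).2 hSK) inf_le_left)
  obtain ⟨y, hy, hyx⟩ : f x ∈ (closure S).map f := by
    rw [MonoidHom.map_closure, hS]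
    exact mem_map_of_mem f hx
  have hyK : y ∈ K := (closure_le _).2 hSK hy
  have hker : y⁻¹ * x ∈ K ⊓ f.ker :=
    mem_inf.2 ⟨mul_mem (inv_mem hyK) hx,
      by rw [MonoidHom.mem_ker, map_mul, map_inv, hyx, inv_mul_cancel]⟩
  simpa using mul_mem (mem_sup_left hy) (mem_sup_right hker)

theorem FG.map {K : Subgroup G} (hK : K.FG) (f : G →* Q) : (K.map f).FG :=
  (fg_iff_submonoid_fg _).2 (((fg_iff_submonoid_fg K).1 hK).map f)

theorem fg_of_commGroup {A : Type*} [CommGroup A] [Group.FG A] (B : Subgroup A) : B.FG := by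
  rw [fg_iff_add_fg]
  exact (Submodule.fg_iff_addSubgroup_fg _).1
    (IsNoetherian.noetherian (AddSubgroup.toIntSubmodule B.toAddSubgroup))

theorem FG.inf_of_le_center {L : Subgroup G} (hL : L.FG) (hLc : L ≤ center G) (K : Subgroup G) :
    (K ⊓ L).FG := by
  have : IsMulCommutative L := ⟨⟨fun a b => Subtype.ext (mem_center_iff.1 (hLc a.2) b).symm⟩⟩
  have : Group.FG L := (Group.fg_iff_subgroup_fg L).2 hL
  simpa using (fg_of_commGroup (K.subgroupOf L)).map L.subtype

theorem lowerCentralSeries_le_center_of_succ_eq_bot {n : ℕ}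
    (hn : lowerCentralSeries (⊤ : Subgroup G) (n + 1) = ⊥) :
    lowerCentralSeries (⊤ : Subgroup G) n ≤ center G := by
  rw [lowerCentralSeries_succ, commutator_eq_bot_iff_le_centralizer, coe_top,
    centralizer_univ] at hn
  exact hn

theorem fg_of_lowerCentralSeries_eq_bot {n : ℕ} :
    ∀ {G : Type*} [Group G] [Group.FG G], lowerCentralSeries (⊤ : Subgroup G) n = ⊥ →
      ∀ K : Subgroup G, K.FG := by
  induction n with
  | zero =>
    intro G _ _ hn K
    rw [lowerCentralSeries_zero] at hn
    exact (eq_bot_iff.2 (hn ▸ le_top) : K = ⊥) ▸ FG.bot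
  | succ n ih =>
    intro G _ _ hn K
    have : Group.IsNilpotent G := nilpotent_iff_lowerCentralSeries.2 ⟨_, hn⟩
    set L := lowerCentralSeries (⊤ : Subgroup G) n
    have hquot : lowerCentralSeries (⊤ : Subgroup (G ⧸ L)) n = ⊥ := by
      rw [← map_top_of_surjective _ (QuotientGroup.mk'_surjective L), ← map_lowerCentralSeries,
        map_eq_bot_iff, QuotientGroup.ker_mk']
    refine FG.of_inf_ker_of_map (f := QuotientGroup.mk' L) ?_ (ih hquot _)
    rw [QuotientGroup.ker_mk']
    exact (lowerCentralSeries_fg n).inf_of_le_center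
      (lowerCentralSeries_le_center_of_succ_eq_bot hn) K

theorem fg_of_isNilpotent [Group.FG G] [Group.IsNilpotent G] (K : Subgroup G) : K.FG :=
  fg_of_lowerCentralSeries_eq_bot lowerCentralSeries_nilpotencyClass K

end Subgroup

open Subgroup

theorem CommGroup.nonempty_mulEquiv_multiplicative_int {A : Type*} [CommGroup A] [Group.FG A]
    [IsMulTorsionFree A] {a : A} (ha : a ≠ 1)
    (h : ∀ M : Subgroup A, M.IsIsolated → M ≠ ⊥ → a ∈ M) :
    Nonempty (A ≃* Multiplicative ℤ) := by
  let b := Module.Free.chooseBasis ℤ (Additive A)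
  obtain ⟨i, hi⟩ : ∃ i, b.repr (Additive.ofMul a) i ≠ 0 :=
    Finsupp.ne_iff.1 (by simpa using ha : b.repr (Additive.ofMul a) ≠ 0)
  have hunique : ∀ j, j = i := by
    intro j
    by_contra hji
    let f := AddMonoidHom.toMultiplicativeRight (b.coord i).toAddMonoidHom
    have hb : Additive.toMul (b j) ∈ f.ker := by
      simp [f, Module.Basis.coord_apply, Finsupp.single_eq_of_ne' hji]
    refine hi (h f.ker (by simpa using isIsolated_bot.comap f) fun hker => b.ne_zero j ?_)
    rw [hker, mem_bot] at hb
    simpa using congrArg Additive.ofMul hb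
  have : Unique (Module.Free.ChooseBasisIndex ℤ (Additive A)) := ⟨⟨i⟩, hunique⟩
  exact ⟨(b.equivFun.trans (LinearEquiv.funUnique _ ℤ ℤ)).toAddEquiv.toMultiplicativeRight⟩

namespace Subgroup

variable {G : Type*} [Group G]

theorem exists_maximal_isolated_normal_not_mem (hG : (⊥ : Subgroup G).IsIsolated) {γ : G}
    (hγ : γ ≠ 1) :
    ∃ Λ : Subgroup G, Maximal (fun Λ : Subgroup G => Λ.Normal ∧ Λ.IsIsolated ∧ γ ∉ Λ) Λ := by
  set S := {Λ : Subgroup G | Λ.Normal ∧ Λ.IsIsolated ∧ γ ∉ Λ}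
  have hchains : ∀ c ⊆ S, IsChain (· ≤ ·) c → ∀ K ∈ c, ∃ ub ∈ S, ∀ M ∈ c, M ≤ ub := by
    intro c hc hchain K hK
    have hmem {x : G} : x ∈ sSup c ↔ ∃ M ∈ c, x ∈ M :=
      mem_sSup_of_directedOn ⟨K, hK⟩ hchain.directedOn
    refine ⟨sSup c, ⟨⟨fun x hx g => ?_⟩, fun x n hn hxn => ?_, fun hγc => ?_⟩,
      fun M hM => le_sSup hM⟩
    · obtain ⟨M, hM, hxM⟩ := hmem.1 hx
      exact hmem.2 ⟨M, hM, (hc hM).1.conj_mem x hxM g⟩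
    · obtain ⟨M, hM, hxM⟩ := hmem.1 hxn
      exact hmem.2 ⟨M, hM, (hc hM).2.1 hn hxM⟩
    · obtain ⟨M, hM, hγM⟩ := hmem.1 hγc
      exact (hc hM).2.2 hγM
  obtain ⟨Λ, -, hΛ⟩ := zorn_le_nonempty₀ S hchains ⊥ ⟨inferInstance, hG, by rwa [mem_bot]⟩
  exact ⟨Λ, hΛ⟩

theorem mem_of_maximal_isolated_normal_not_mem {γ : G} {Λ : Subgroup G} [Λ.Normal]
    (hΛ : Maximal (fun Λ : Subgroup G => Λ.Normal ∧ Λ.IsIsolated ∧ γ ∉ Λ) Λ)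
    {N : Subgroup (G ⧸ Λ)} (hNc : N ≤ center (G ⧸ Λ)) (hN : N.IsIsolated) (hN0 : N ≠ ⊥) :
    (γ : G ⧸ Λ) ∈ N := by
  have hNn : N.Normal := ⟨fun n hn g => by rwa [mem_center_iff.1 (hNc hn) g, mul_inv_cancel_right]⟩
  by_contra hγN
  have hle : Λ ≤ N.comap (QuotientGroup.mk' Λ) := fun x hx => by
    simp [(QuotientGroup.eq_one_iff x).2 hx]
  have hΛN : N.comap (QuotientGroup.mk' Λ) ≤ Λ :=
    hΛ.2 ⟨hNn.comap _, hN.comap _, hγN⟩ hle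
  apply hN0
  rw [← map_comap_eq_self_of_surjective (QuotientGroup.mk'_surjective Λ) N, map_eq_bot_iff,
    QuotientGroup.ker_mk']
  exact hΛN

end Subgroup

open Subgroup

theorem stmt0_general (Γ : Type) [Group Γ] [Group.FG Γ] [Group.IsNilpotent Γ]
    (hTF : ∀ g : Γ, g ≠ 1 → ¬ IsOfFinOrder g)
    (γ : Γ) (hγ : γ ∈ Subgroup.center Γ) (hγne : γ ≠ 1) :
    ∃ (Λ : Subgroup Γ) (hΛ : Λ.Normal),
      letI := hΛ
      Group.IsNilpotent (Γ ⧸ Λ) ∧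
      (∀ g : Γ ⧸ Λ, g ≠ 1 → ¬ IsOfFinOrder g) ∧
      Nonempty (Subgroup.center (Γ ⧸ Λ) ≃* Multiplicative ℤ) ∧
      QuotientGroup.mk' Λ γ ≠ 1 := by
  obtain ⟨Λ, hΛ⟩ := exists_maximal_isolated_normal_not_mem (isIsolated_bot_iff.2 hTF) hγne
  obtain ⟨hΛn, hΛi, hγΛ⟩ := hΛ.prop
  set π := QuotientGroup.mk' Λ
  have hQ : (⊥ : Subgroup (Γ ⧸ Λ)).IsIsolated := by
    rw [← isIsolated_comap_iff (QuotientGroup.mk'_surjective Λ), MonoidHom.comap_bot,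
      QuotientGroup.ker_mk']
    exact hΛi
  have hπγ : π γ ∈ center (Γ ⧸ Λ) := by
    have := Subgroup.upperCentralSeries.map (QuotientGroup.mk'_surjective Λ) 1
    rw [Subgroup.upperCentralSeries_one, Subgroup.upperCentralSeries_one] at this
    exact this (mem_map_of_mem π hγ)
  have hπγ1 : π γ ≠ 1 := by rwa [QuotientGroup.mk'_apply, Ne, QuotientGroup.eq_one_iff]
  refine ⟨Λ, hΛn, inferInstance, isIsolated_bot_iff.1 hQ, ?_, hπγ1⟩
  have : Group.FG (center (Γ ⧸ Λ)) := (Group.fg_iff_subgroup_fg _).2 (fg_of_isNilpotent _)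
  have : IsMulTorsionFree (center (Γ ⧸ Λ)) :=
    isMulTorsionFree_of_isIsolated_bot (by simpa using hQ.comap (center _).subtype)
  refine CommGroup.nonempty_mulEquiv_multiplicative_int (a := ⟨π γ, hπγ⟩)
    (fun h => hπγ1 (congrArg Subtype.val h)) fun M hM hM0 => ?_
  refine (mem_map_iff_mem (subtype_injective _)).1 (mem_of_maximal_isolated_normal_not_mem hΛ
    (map_subtype_le M) ((isIsolated_center hQ).map_subtype hM) ?_)
  rwa [Ne, map_eq_bot_iff_of_injective _ (subtype_injective _)]

/-- A finitely generated torsion-free nilpotent group with nontrivial center admits,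
for each nontrivial central element `γ`, a normal subgroup `Λ` such that `Γ/Λ` is a
torsion-free nilpotent group with infinite cyclic center in which the image of `γ`
is nontrivial. -/
theorem stmt0 (Γ : Type) [Group Γ] [Group.FG Γ] [Group.IsNilpotent Γ]
    (hTF : ∀ g : Γ, g ≠ 1 → ¬ IsOfFinOrder g)
    (hcenter : Subgroup.center Γ ≠ ⊥)
    (γ : Γ) (hγ : γ ∈ Subgroup.center Γ) (hγne : γ ≠ 1) :
    ∃ (Λ : Subgroup Γ) (hΛ : Λ.Normal),
      letI := hΛ
      Group.IsNilpotent (Γ ⧸ Λ) ∧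
      (∀ g : Γ ⧸ Λ, g ≠ 1 → ¬ IsOfFinOrder g) ∧
      Nonempty (Subgroup.center (Γ ⧸ Λ) ≃* Multiplicative ℤ) ∧
      QuotientGroup.mk' Λ γ ≠ 1 :=
  stmt0_general Γ hTF γ hγ hγne
end

section
/- For every integer t ≠ 0 there exists a prime p not dividing t with p ≤ C·log(C·|t|) for some absolute constant C ∈ ℕ (independent of t, valid for all |t| ≥ 2). -/
open Finset


-- Lemma 1: centralBinom n ≤ (2n)^(sqrt(2n)) * primorial (2n)
theorem aux_binom_le (n : ℕ) (hn : 0 < n) :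
    Nat.centralBinom n ≤ (2 * n) ^ (Nat.sqrt (2 * n)) * primorial (2 * n) := by
  classical
  set B := Nat.centralBinom n with hB
  have hB0 : B ≠ 0 := (Nat.centralBinom_pos n).ne'
  have h2n : 0 < 2 * n := by omega
  have hfact : B.factorization.prod (· ^ ·) = B := Nat.factorization_prod_pow_eq_self hB0
  rw [Nat.prod_factorization_eq_prod_primeFactors] at hfact
  set S := B.primeFactors.filter (fun p => p * p ≤ 2 * n) with hS
  set T := B.primeFactors.filter (fun p => ¬ p * p ≤ 2 * n) with hT
  have hsplit : ∏ p ∈ B.primeFactors, p ^ B.factorization p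
      = (∏ p ∈ S, p ^ B.factorization p) * ∏ p ∈ T, p ^ B.factorization p := by
    rw [hS, hT, prod_filter_mul_prod_filter_not]
  have hSbound : ∏ p ∈ S, p ^ B.factorization p ≤ (2 * n) ^ (Nat.sqrt (2 * n)) := by
    calc ∏ p ∈ S, p ^ B.factorization p ≤ ∏ _p ∈ S, (2 * n) := by
          apply Finset.prod_le_prod' -- maybe wrong name
          intro p hp
          exact Nat.pow_factorization_choose_le h2n
      _ = (2 * n) ^ S.card := by rw [prod_const]
      _ ≤ (2 * n) ^ (Nat.sqrt (2 * n)) := by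
          apply Nat.pow_le_pow_right h2n
          have : S ⊆ Finset.Icc 2 (Nat.sqrt (2 * n)) := by
            intro p hp
            rw [hS, mem_filter] at hp
            obtain ⟨hp1, hp2⟩ := hp
            have hprime := Nat.prime_of_mem_primeFactors hp1
            rw [Finset.mem_Icc]
            exact ⟨hprime.two_le, Nat.le_sqrt'.mpr (by rw [pow_two]; exact hp2)⟩
          calc S.card ≤ (Finset.Icc 2 (Nat.sqrt (2 * n))).card := card_le_card this
            _ ≤ _ := by rw [Nat.card_Icc]; omega
  have hTbound : ∏ p ∈ T, p ^ B.factorization p ≤ primorial (2 * n) := by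
    have h1 : ∀ p ∈ T, p ^ B.factorization p = p := by
      intro p hp
      rw [hT, mem_filter] at hp
      obtain ⟨hp1, hp2⟩ := hp
      have hfe : 1 ≤ B.factorization p := by
        have := Nat.Prime.factorization_pos_of_dvd (Nat.prime_of_mem_primeFactors hp1) hB0
          (Nat.dvd_of_mem_primeFactors hp1)
        omega
      have hle : B.factorization p ≤ 1 := by
        apply Nat.factorization_choose_le_one
        push_neg at hp2
        calc 2 * n < p * p := hp2
          _ = p ^ 2 := by ring
      have : B.factorization p = 1 := le_antisymm hle hfe
      rw [this, pow_one]
    rw [Finset.prod_congr rfl h1]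
    unfold primorial
    apply Finset.prod_le_prod_of_subset_of_one_le'
    · intro p hp
      rw [hT, mem_filter] at hp
      obtain ⟨hp1, _⟩ := hp
      simp only [mem_filter, mem_range]
      refine ⟨?_, Nat.prime_of_mem_primeFactors hp1⟩
      have hple : p ≤ 2 * n := by
        apply Nat.le_two_mul_of_factorization_centralBinom_pos
        have := Nat.Prime.factorization_pos_of_dvd (Nat.prime_of_mem_primeFactors hp1) hB0
          (Nat.dvd_of_mem_primeFactors hp1)
        exact this
      omega
    · intro p hp _
      have := (mem_filter.mp hp).2
      exact this.one_lt.le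
  calc B = (∏ p ∈ S, p ^ B.factorization p) * ∏ p ∈ T, p ^ B.factorization p := by
        rw [← hsplit, hfact]
    _ ≤ (2 * n) ^ (Nat.sqrt (2 * n)) * primorial (2 * n) :=
        Nat.mul_le_mul hSbound hTbound


theorem aux_log_le (y : ℝ) (hy : 1 ≤ y) : Real.log y ≤ 4 * y ^ ((1:ℝ)/4) := by
  have h1 : (0:ℝ) < y := by linarith
  have h2 : Real.log (y ^ ((1:ℝ)/4)) ≤ y ^ ((1:ℝ)/4) - 1 :=
    Real.log_le_sub_one_of_pos (Real.rpow_pos_of_pos h1 _)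
  rw [Real.log_rpow h1] at h2
  nlinarith [Real.rpow_nonneg h1.le ((1:ℝ)/4)]

theorem aux_real_ineq (x : ℝ) (hx : 400000 ≤ x) :
    Real.log x + Real.sqrt (2*x) * Real.log (2*x) ≤ x * Real.log 2 := by
  have hx1 : (1:ℝ) ≤ x := by linarith
  have hx0 : (0:ℝ) < x := by linarith
  have h2x1 : (1:ℝ) ≤ 2*x := by linarith
  have h2x0 : (0:ℝ) < 2*x := by linarith
  have hlx : Real.log x ≤ 4 * x ^ ((1:ℝ)/4) := aux_log_le x hx1
  have hl2x : Real.log (2*x) ≤ 4 * (2*x) ^ ((1:ℝ)/4) := aux_log_le _ h2x1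
  have hsq : Real.sqrt (2*x) = (2*x) ^ ((1:ℝ)/2) := Real.sqrt_eq_rpow _
  have hs0 : (0:ℝ) ≤ Real.sqrt (2*x) := Real.sqrt_nonneg _
  have hradd : (2*x) ^ ((1:ℝ)/2) * (2*x) ^ ((1:ℝ)/4) = (2*x) ^ ((3:ℝ)/4) := by
    rw [← Real.rpow_add h2x0]; norm_num
  have hlog2x : (0:ℝ) ≤ Real.log (2*x) := Real.log_nonneg h2x1
  have step1 : Real.sqrt (2*x) * Real.log (2*x) ≤ 4 * (2*x) ^ ((3:ℝ)/4) := by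
    calc Real.sqrt (2*x) * Real.log (2*x) ≤ Real.sqrt (2*x) * (4 * (2*x) ^ ((1:ℝ)/4)) :=
          mul_le_mul_of_nonneg_left hl2x hs0
      _ = 4 * ((2*x) ^ ((1:ℝ)/2) * (2*x) ^ ((1:ℝ)/4)) := by rw [hsq]; ring
      _ = 4 * (2*x) ^ ((3:ℝ)/4) := by rw [hradd]
  have step2 : x ^ ((1:ℝ)/4) ≤ (2*x) ^ ((3:ℝ)/4) := by
    calc x ^ ((1:ℝ)/4) ≤ x ^ ((3:ℝ)/4) :=
          Real.rpow_le_rpow_of_exponent_le hx1 (by norm_num)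
      _ ≤ (2*x) ^ ((3:ℝ)/4) := Real.rpow_le_rpow hx0.le (by linarith) (by norm_num)
  have step3 : (2*x) ^ ((3:ℝ)/4) ≤ 2 * x ^ ((3:ℝ)/4) := by
    rw [Real.mul_rpow (by norm_num) hx0.le]
    have : (2:ℝ) ^ ((3:ℝ)/4) ≤ 2 := by
      calc (2:ℝ) ^ ((3:ℝ)/4) ≤ (2:ℝ) ^ ((1:ℝ)) :=
            Real.rpow_le_rpow_of_exponent_le (by norm_num) (by norm_num)
        _ = 2 := Real.rpow_one 2
    have h34 : (0:ℝ) ≤ x ^ ((3:ℝ)/4) := Real.rpow_nonneg hx0.le _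
    nlinarith
  -- so LHS ≤ 16 * x^{3/4}
  have hLHS : Real.log x + Real.sqrt (2*x) * Real.log (2*x) ≤ 16 * x ^ ((3:ℝ)/4) := by
    have h34 : (0:ℝ) ≤ x ^ ((3:ℝ)/4) := Real.rpow_nonneg hx0.le _
    nlinarith
  -- RHS ≥ 16 * x^{3/4}
  have hxsplit : x ^ ((3:ℝ)/4) * x ^ ((1:ℝ)/4) = x := by
    rw [← Real.rpow_add hx0]; norm_num
  have hx14 : (24:ℝ) ≤ x ^ ((1:ℝ)/4) := by
    have h24 : ((331776:ℝ)) ^ ((1:ℝ)/4) = 24 := by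
      have : (331776:ℝ) = (24:ℝ) ^ (4:ℕ) := by norm_num
      rw [this, ← Real.rpow_natCast 24 4, ← Real.rpow_mul (by norm_num)]
      norm_num
    rw [← h24]
    exact Real.rpow_le_rpow (by norm_num) (by linarith) (by norm_num)
  have hlog2 : (2:ℝ)/3 ≤ Real.log 2 := by
    have := Real.log_two_gt_d9
    linarith
  have h34 : (0:ℝ) ≤ x ^ ((3:ℝ)/4) := Real.rpow_nonneg hx0.le _
  have hRHS : 16 * x ^ ((3:ℝ)/4) ≤ x * Real.log 2 := by
    have h16 : (16:ℝ) ≤ x ^ ((1:ℝ)/4) * Real.log 2 := by nlinarith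
    calc 16 * x ^ ((3:ℝ)/4) ≤ x ^ ((3:ℝ)/4) * (x ^ ((1:ℝ)/4) * Real.log 2) := by nlinarith
      _ = x * Real.log 2 := by rw [← mul_assoc, hxsplit]
  linarith

theorem aux_nat_ineq (n : ℕ) (hn : 400000 ≤ n) :
    n * (2*n) ^ (Nat.sqrt (2*n)) ≤ 2 ^ n := by
  have key : ((n:ℝ)) * ((2*(n:ℝ))) ^ (Nat.sqrt (2*n)) ≤ (2:ℝ) ^ n := by
    set x := (n:ℝ) with hxdef
    have hx : (400000:ℝ) ≤ x := by rw [hxdef]; exact_mod_cast hn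
    have hx0 : (0:ℝ) < x := by linarith
    have h2x0 : (0:ℝ) < 2*x := by linarith
    have h2x1 : (1:ℝ) ≤ 2*x := by linarith
    have hs : ((Nat.sqrt (2*n) : ℕ) : ℝ) ≤ Real.sqrt (2*x) := by
      rw [show (2*x) = ((2*n : ℕ):ℝ) by push_cast; ring]
      apply Real.le_sqrt_of_sq_le
      exact_mod_cast Nat.sqrt_le' (2*n)
    have step1 : (2*x) ^ (Nat.sqrt (2*n)) ≤ (2*x) ^ (Real.sqrt (2*x)) := by
      rw [← Real.rpow_natCast (2*x) (Nat.sqrt (2*n))]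
      exact Real.rpow_le_rpow_of_exponent_le h2x1 hs
    have step2 : x * (2*x) ^ (Real.sqrt (2*x)) ≤ (2:ℝ) ^ (x:ℝ) := by
      have hp1 : (0:ℝ) < x * (2*x) ^ (Real.sqrt (2*x)) := by positivity
      have hp2 : (0:ℝ) < (2:ℝ) ^ (x:ℝ) := Real.rpow_pos_of_pos (by norm_num) _
      rw [← Real.log_le_log_iff hp1 hp2]
      rw [Real.log_mul hx0.ne' (Real.rpow_pos_of_pos h2x0 _).ne', Real.log_rpow h2x0,
        Real.log_rpow (by norm_num : (0:ℝ) < 2)]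
      exact aux_real_ineq x hx
    calc x * (2*x) ^ (Nat.sqrt (2*n)) ≤ x * (2*x) ^ (Real.sqrt (2*x)) := by
          exact mul_le_mul_of_nonneg_left step1 hx0.le
      _ ≤ (2:ℝ) ^ (x:ℝ) := step2
      _ = (2:ℝ) ^ n := by rw [hxdef, Real.rpow_natCast]
  exact_mod_cast key


theorem aux_primorial (n : ℕ) (hn : 400000 ≤ n) : 2 ^ n < primorial (2*n) := by
  have h1 : 4 ^ n < n * Nat.centralBinom n := Nat.four_pow_lt_mul_centralBinom n (by omega)
  have h2 : Nat.centralBinom n ≤ (2 * n) ^ (Nat.sqrt (2 * n)) * primorial (2 * n) :=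
    aux_binom_le n (by omega)
  have h3 : n * (2*n) ^ (Nat.sqrt (2*n)) ≤ 2 ^ n := aux_nat_ineq n hn
  have h4 : 2^n * 2^n < 2^n * primorial (2*n) := by
    calc 2^n * 2^n = 4^n := by rw [← mul_pow]; norm_num
      _ < n * Nat.centralBinom n := h1
      _ ≤ n * ((2*n)^(Nat.sqrt (2*n)) * primorial (2*n)) := Nat.mul_le_mul_left _ h2
      _ = (n * (2*n)^(Nat.sqrt (2*n))) * primorial (2*n) := by ring
      _ ≤ 2^n * primorial (2*n) := Nat.mul_le_mul_right _ h3
  exact Nat.lt_of_mul_lt_mul_left h4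

theorem aux_exists_prime (t : ℤ) (ht : 2 ≤ |t|) (n : ℕ) (hn : 400000 ≤ n)
    (hM : t.natAbs < 2 ^ n) :
    ∃ p : ℕ, p.Prime ∧ ¬ ((p : ℤ) ∣ t) ∧ p ≤ 2 * n := by
  by_contra hcon
  push_neg at hcon
  have hdvd : primorial (2*n) ∣ t.natAbs := by
    unfold primorial
    apply Finset.prod_primes_dvd
    · intro p hp
      simp only [Finset.mem_filter] at hp
      exact hp.2.prime
    · intro p hp
      simp only [Finset.mem_filter, Finset.mem_range] at hp
      obtain ⟨hlt, hprime⟩ := hp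
      have hple : p ≤ 2*n := by omega
      by_contra hnd
      have : ¬ ((p:ℤ) ∣ t) := by
        intro h
        apply hnd
        rwa [← Int.natAbs_dvd_natAbs, Int.natAbs_natCast] at h
      have := hcon p hprime this
      omega
  have hMpos : t.natAbs ≠ 0 := by
    intro h
    rw [Int.abs_eq_natAbs, h] at ht
    norm_num at ht
  have := Nat.le_of_dvd (Nat.pos_of_ne_zero hMpos) hdvd
  have hcheb := aux_primorial n hn
  omega

/-- There is an absolute constant `C` such that every integer `t` with `|t| ≥ 2` fails to be
divisible by some prime `p ≤ C·log(C·|t|)`. -/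
theorem stmt18 :
    ∃ C : ℕ, 0 < C ∧ ∀ t : ℤ, 2 ≤ |t| →
      ∃ p : ℕ, p.Prime ∧ ¬ ((p : ℤ) ∣ t) ∧
        (p : ℝ) ≤ (C : ℝ) * Real.log ((C : ℝ) * (t.natAbs : ℝ)) := by
  refine ⟨800005, by norm_num, fun t ht => ?_⟩
  set M := t.natAbs with hMdef
  have ht' : (2:ℤ) ≤ (M : ℤ) := by rwa [Int.abs_eq_natAbs] at ht
  have hM2 : 2 ≤ M := by exact_mod_cast ht'
  set L := Nat.log 2 M with hLdef
  set n := max 400000 (L + 1) with hndef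
  have hn : 400000 ≤ n := le_max_left _ _
  have hMlt : M < 2 ^ n := by
    calc M < 2 ^ (L + 1) := Nat.lt_pow_succ_log_self (by norm_num) M
      _ ≤ 2 ^ n := Nat.pow_le_pow_right (by norm_num) (le_max_right _ _)
  obtain ⟨p, hp, hnd, hple⟩ := aux_exists_prime t ht n hn hMlt
  refine ⟨p, hp, hnd, ?_⟩
  have hnle : n ≤ 400000 + (L + 1) := max_le (by omega) (by omega)
  have hpleR : (p:ℝ) ≤ 800002 + 2 * (L:ℝ) := by
    have : p ≤ 800002 + 2 * L := by omega
    exact_mod_cast this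
  have hlog2 : (2:ℝ)/3 ≤ Real.log 2 := by
    have := Real.log_two_gt_d9; linarith
  have hlogM : (0:ℝ) ≤ Real.log M := Real.log_nonneg (by exact_mod_cast (by omega : 1 ≤ M))
  have hLle : (L:ℝ) * Real.log 2 ≤ Real.log M := by
    have h2L : (2:ℕ) ^ L ≤ M := Nat.pow_log_le_self 2 (by omega)
    have hc : ((2:ℝ)) ^ L ≤ (M:ℝ) := by exact_mod_cast h2L
    have := Real.log_le_log (by positivity) hc
    rwa [Real.log_pow] at this
  have hLlog : (L:ℝ) ≤ (3/2) * Real.log M := by nlinarith [Nat.cast_nonneg (α := ℝ) L]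
  have hlogC : (1:ℝ) ≤ Real.log 800005 := by
    rw [Real.le_log_iff_exp_le (by norm_num)]
    have := Real.exp_one_lt_d9
    linarith
  have hsplit : Real.log ((800005:ℝ) * M) = Real.log 800005 + Real.log M :=
    Real.log_mul (by norm_num) (by exact_mod_cast (by omega : M ≠ 0))
  push_cast
  rw [hsplit]
  nlinarith
end
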